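/- Let G be a connected graph on vertices v_1, …, v_n, let H^1, …, H^n be pairwise disjoint connected 1-tough graphs disjoint from G, and let w^i be a designated vertex of H^i for each i ∈ [n]. Let G' be the graph obtained from the disjoint union of G, H^1, …, H^n by adding the edge v_i w^i for every i ∈ [n]. Then G is 1-tough if and only if G' is 1/2-tough. -/

import Mathlib

open SimpleGraph
open scoped ENNReal

namespace Toughness

variable {V : Type*}

/-- Number of connected components of the graph obtained from `G` by deleting the vertex set `S`. -/
noncomputable def numComp (G : SimpleGraph V) (S : Set V) : ℕ :=
  Nat.card (G.induce Sᶜ).ConnectedComponent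

/-- `S` is a cutset of `G`: deleting it leaves more than one connected component. -/
def IsCutset (G : SimpleGraph V) (S : Set V) : Prop :=
  1 < numComp G S

/-- `G` is `t`-tough: every cutset `S` satisfies `t · ω(G−S) ≤ |S|`. -/
def IsTough (t : ℝ) (G : SimpleGraph V) : Prop :=
  ∀ S : Set V, IsCutset G S → t * (numComp G S : ℝ) ≤ (S.ncard : ℝ)

/-- The toughness of `G`: the infimum of `|S| / ω(G−S)` over all cutsets `S`,
with value `∞` when there is no cutset (e.g. for complete graphs). -/
noncomputable def toughness (G : SimpleGraph V) : ℝ≥0∞ :=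
  ⨅ (S : Set V) (_ : IsCutset G S), (S.ncard : ℝ≥0∞) / (numComp G S : ℝ≥0∞)

/-- The graph `G'` obtained from the disjoint union of `G` (on vertex type `V`) and the graphs
`H i` (on vertex types `K i`, `i : V`) by adding the edge `v_i w^i` (i.e. `Sum.inl i` —
`Sum.inr ⟨i, w i⟩`) for every `i`. -/
def glue {V : Type*} {K : V → Type*} (G : SimpleGraph V)
    (H : ∀ i, SimpleGraph (K i)) (w : ∀ i, K i) :
    SimpleGraph (V ⊕ (Σ i, K i)) :=
  SimpleGraph.fromRel (fun x y =>
    match x, y with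
    | Sum.inl u, Sum.inl v => G.Adj u v
    | Sum.inl u, Sum.inr p => u = p.1 ∧ p.2 = w p.1
    | Sum.inr p, Sum.inr q => ∃ h : p.1 = q.1, (H q.1).Adj (cast (congrArg K h) p.2) q.2
    | _, _ => False)

section Aux

lemma nat_card_sigma {ι : Type*} [Fintype ι] (β : ι → Type*) [∀ i, Finite (β i)] :
    Nat.card (Σ i, β i) = ∑ i, Nat.card (β i) := by
  haveI := fun i => Fintype.ofFinite (β i)
  simp [Nat.card_eq_fintype_card, Fintype.card_sigma]

variable {K : V → Type*} (G : SimpleGraph V)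
  (H : ∀ i, SimpleGraph (K i)) (w : ∀ i, K i)

/-- vertices of `V` inside `P` -/
def Sset (P : Set (V ⊕ Σ i, K i)) : Set V := {v | Sum.inl v ∈ P}

/-- vertices of `K i` inside `P` -/
def Tset (P : Set (V ⊕ Σ i, K i)) (i : V) : Set (K i) := {k | Sum.inr ⟨i, k⟩ ∈ P}

def projV : (V ⊕ Σ i, K i) → V := Sum.elim id Sigma.fst

@[simp] lemma projV_inl (u : V) : projV (K := K) (Sum.inl u) = u := rfl
@[simp] lemma projV_inr (p : Σ i, K i) : projV (K := K) (Sum.inr p) = p.1 := rfl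

def splitEquiv (P : Set (V ⊕ Σ i, K i)) :
    ↥P ≃ (↥(Sset P) ⊕ Σ i, ↥(Tset P i)) where
  toFun x := match x with
    | ⟨Sum.inl v, h⟩ => Sum.inl ⟨v, h⟩
    | ⟨Sum.inr ⟨i, k⟩, h⟩ => Sum.inr ⟨i, ⟨k, h⟩⟩
  invFun y := match y with
    | Sum.inl ⟨v, h⟩ => ⟨Sum.inl v, h⟩
    | Sum.inr ⟨i, ⟨k, h⟩⟩ => ⟨Sum.inr ⟨i, k⟩, h⟩
  left_inv x := by rcases x with ⟨v | ⟨i, k⟩, h⟩ <;> rfl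
  right_inv y := by rcases y with ⟨v, h⟩ | ⟨i, k, h⟩ <;> rfl

lemma ncard_split [Fintype V] [∀ i, Fintype (K i)] (P : Set (V ⊕ Σ i, K i)) :
    P.ncard = (Sset P).ncard + ∑ i, (Tset P i).ncard := by
  classical
  rw [← Nat.card_coe_set_eq, Nat.card_congr (splitEquiv P), Nat.card_sum,
    nat_card_sigma, Nat.card_coe_set_eq]
  exact congrArg _ (Finset.sum_congr rfl fun i _ => Nat.card_coe_set_eq _)

attribute [local instance] Classical.propDecidable

lemma glue_adj_inl_inl {u v : V} :
    (glue G H w).Adj (Sum.inl u) (Sum.inl v) ↔ G.Adj u v := by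
  rw [glue, fromRel_adj]
  constructor
  · rintro ⟨-, h | h⟩
    · exact h
    · exact h.symm
  · intro h
    exact ⟨by simp [h.ne], Or.inl h⟩

lemma glue_adj_inl_inr {u i : V} {k : K i} :
    (glue G H w).Adj (Sum.inl u) (Sum.inr ⟨i, k⟩) ↔ u = i ∧ k = w i := by
  rw [glue, fromRel_adj]
  constructor
  · rintro ⟨-, h | h⟩
    · exact h
    · exact h.elim
  · rintro ⟨rfl, rfl⟩
    exact ⟨by simp, Or.inl ⟨rfl, rfl⟩⟩

lemma glue_adj_inr_fst {p q : Σ i, K i} :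
    (glue G H w).Adj (Sum.inr p) (Sum.inr q) → p.1 = q.1 := by
  rw [glue, fromRel_adj]
  rintro ⟨-, ⟨h, -⟩ | ⟨h, -⟩⟩
  · exact h
  · exact h.symm

lemma glue_adj_inr_inr {i : V} {a b : K i} (hab : (H i).Adj a b) :
    (glue G H w).Adj (Sum.inr ⟨i, a⟩) (Sum.inr ⟨i, b⟩) := by
  rw [glue, fromRel_adj]
  exact ⟨by simp [hab.ne], Or.inl ⟨rfl, hab⟩⟩

variable (P : Set (V ⊕ Σ i, K i))

/-- lift of the induced subgraph of `G` into the induced subgraph of the glued graph -/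
def liftG : (G.induce (Sset P)ᶜ) →g ((glue G H w).induce Pᶜ) where
  toFun a := ⟨Sum.inl a.1, a.2⟩
  map_rel' := fun h => (glue_adj_inl_inl G H w).mpr h

/-- lift of the induced subgraph of `H i` into the induced subgraph of the glued graph -/
def liftH (i : V) : ((H i).induce (Tset P i)ᶜ) →g ((glue G H w).induce Pᶜ) where
  toFun a := ⟨Sum.inr ⟨i, a.1⟩, a.2⟩
  map_rel' := fun h => glue_adj_inr_inr G H w h

lemma walk_proj {x y : ↥(Pᶜ)} (p : ((glue G H w).induce Pᶜ).Walk x y)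
    (v : V) (hy : y.1 = Sum.inl v) :
    ∃ (h1 : projV (K := K) x.1 ∈ (Sset P)ᶜ) (h2 : v ∈ (Sset P)ᶜ),
      (G.induce (Sset P)ᶜ).Reachable ⟨projV x.1, h1⟩ ⟨v, h2⟩ := by
  induction p with
  | nil =>
    rename_i u
    obtain ⟨y1, hyP⟩ := u
    subst hy
    exact ⟨hyP, hyP, Reachable.refl _⟩
  | @cons a b c h p ih =>
    obtain ⟨h1z, h2, hr⟩ := ih hy
    obtain ⟨x1, hx⟩ := a
    obtain ⟨z1, hz⟩ := b
    have hadj : (glue G H w).Adj x1 z1 := h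
    rcases x1 with u | ⟨i, k⟩ <;> rcases z1 with u' | ⟨j, k'⟩
    · refine ⟨hx, h2, Reachable.trans ?_ hr⟩
      exact SimpleGraph.Adj.reachable
        (by exact (glue_adj_inl_inl G H w).mp hadj :
          (G.induce (Sset P)ᶜ).Adj ⟨u, hx⟩ ⟨u', h1z⟩)
    · obtain ⟨rfl, -⟩ := (glue_adj_inl_inr G H w).mp hadj
      exact ⟨hx, h2, hr⟩
    · obtain ⟨rfl, -⟩ := (glue_adj_inl_inr G H w).mp hadj.symm
      exact ⟨hz, h2, hr⟩
    · have hij : i = j := glue_adj_inr_fst G H w hadj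
      subst hij
      exact ⟨h1z, h2, hr⟩

lemma walk_to_inr {x y : ↥(Pᶜ)} (p : ((glue G H w).induce Pᶜ).Walk x y)
    (j : V) (l : K j) (hy : y.1 = Sum.inr ⟨j, l⟩) (hj : Sum.inl j ∈ P) :
    ∃ k : K j, x.1 = Sum.inr ⟨j, k⟩ := by
  induction p with
  | nil => exact ⟨l, hy⟩
  | @cons a b c h p ih =>
    obtain ⟨k'', hz⟩ := ih hy
    obtain ⟨x1, hx⟩ := a
    obtain ⟨z1, hzP⟩ := b
    have hadj : (glue G H w).Adj x1 z1 := h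
    subst hz
    rcases x1 with u | ⟨i, k⟩
    · obtain ⟨rfl, -⟩ := (glue_adj_inl_inr G H w).mp hadj
      exact absurd hj hx
    · have hij : i = j := glue_adj_inr_fst G H w hadj
      subst hij
      exact ⟨k, rfl⟩

/-- Lower bound for the number of components of the glued graph after deleting `P`,
assuming no `w i` is deleted. -/
lemma count_lower [Fintype V] [∀ i, Fintype (K i)]
    (hw : ∀ i, Sum.inr (⟨i, w i⟩ : Σ i, K i) ∉ P) :
    numComp G (Sset P) + (Sset P).ncard ≤ numComp (glue G H w) P := by
  classical
  set W := (glue G H w).induce Pᶜ with hW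
  let f : (G.induce (Sset P)ᶜ).ConnectedComponent ⊕ ↥(Sset P) → W.ConnectedComponent :=
    Sum.elim (ConnectedComponent.map (liftG G H w P))
      (fun i => W.connectedComponentMk ⟨Sum.inr ⟨i.1, w i.1⟩, hw i.1⟩)
  have hf : Function.Injective f := by
    rintro (c | i) (d | j) h
    · obtain ⟨a, rfl⟩ := c.exists_rep
      obtain ⟨b, rfl⟩ := d.exists_rep
      simp only [f, Sum.elim_inl, ConnectedComponent.map_mk] at h
      obtain ⟨q⟩ := (ConnectedComponent.eq).mp h
      obtain ⟨h1, h2, hr⟩ := walk_proj G H w P q b.1 rfl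
      exact congrArg Sum.inl (ConnectedComponent.sound hr)
    · obtain ⟨a, rfl⟩ := c.exists_rep
      simp only [f, Sum.elim_inl, Sum.elim_inr, ConnectedComponent.map_mk] at h
      obtain ⟨q⟩ := (ConnectedComponent.eq).mp h
      obtain ⟨k, hk⟩ := walk_to_inr G H w P q j.1 (w j.1) rfl j.2
      exact absurd hk (by simp [liftG])
    · obtain ⟨b, rfl⟩ := d.exists_rep
      simp only [f, Sum.elim_inl, Sum.elim_inr, ConnectedComponent.map_mk] at h
      obtain ⟨q⟩ := (ConnectedComponent.eq).mp h.symm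
      obtain ⟨k, hk⟩ := walk_to_inr G H w P q i.1 (w i.1) rfl i.2
      exact absurd hk (by simp [liftG])
    · simp only [f, Sum.elim_inr] at h
      obtain ⟨q⟩ := (ConnectedComponent.eq).mp h
      obtain ⟨k, hk⟩ := walk_to_inr G H w P q j.1 (w j.1) rfl j.2
      simp only [Sum.inr.injEq, Sigma.mk.inj_iff] at hk
      exact congrArg _ (Subtype.ext hk.1)
  have hcard := Nat.card_le_card_of_injective f hf
  rwa [Nat.card_sum, Nat.card_coe_set_eq] at hcard

/-- Upper bound for the number of components of the glued graph after deleting `P`. -/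
lemma count_upper [Fintype V] [∀ i, Fintype (K i)] (hHconn : ∀ i, (H i).Connected) :
    numComp (glue G H w) P ≤
      numComp G (Sset P) +
        ∑ i : {i : V // (Tset P i).Nonempty ∨ Sum.inl i ∈ P},
          numComp (H i.1) (Tset P i.1) := by
  classical
  set W := (glue G H w).induce Pᶜ with hW
  let Q : W.ConnectedComponent → Prop :=
    fun c => ∃ a : ↥((Sset P)ᶜ), W.connectedComponentMk ((liftG G H w P) a) = c
  have hsplit : numComp (glue G H w) P =
      Nat.card {c // Q c} + Nat.card {c // ¬ Q c} := by
    rw [numComp, ← Nat.card_sum, Nat.card_congr (Equiv.sumCompl Q).symm]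
  -- first part
  have h1 : Nat.card {c // Q c} ≤ numComp G (Sset P) := by
    rw [numComp]
    have hf : Function.Injective
        (fun c : {c // Q c} =>
          (G.induce (Sset P)ᶜ).connectedComponentMk c.2.choose) := by
      intro c d h
      have hc := c.2.choose_spec
      have hd := d.2.choose_spec
      have hr : (G.induce (Sset P)ᶜ).Reachable c.2.choose d.2.choose :=
        (ConnectedComponent.eq).mp h
      have hr2 := hr.map (liftG G H w P)
      exact Subtype.ext (hc ▸ hd ▸ ConnectedComponent.sound hr2)
    exact Nat.card_le_card_of_injective _ hf
  -- representatives for the second part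
  have hrep : ∀ c : {c // ¬ Q c}, ∃ i : V,
      ((Tset P i).Nonempty ∨ Sum.inl i ∈ P) ∧
      ∃ k : ↥((Tset P i)ᶜ), W.connectedComponentMk ((liftH G H w P i) k) = c.1 := by
    rintro ⟨c, hc⟩
    obtain ⟨x, hx⟩ := c.exists_rep
    obtain ⟨x1, hxP⟩ := x
    rcases x1 with u | ⟨i, k⟩
    · exact absurd ⟨⟨u, hxP⟩, hx⟩ hc
    · refine ⟨i, ?_, ⟨k, hxP⟩, hx⟩
      by_contra hB
      push_neg at hB
      obtain ⟨hT, hiP⟩ := hB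
      have hTe : Tset P i = ∅ := hT
      let e : H i →g (H i).induce (Tset P i)ᶜ :=
        ⟨fun a => ⟨a, by simp [hTe]⟩, fun h => h⟩
      have hreach := (((hHconn i).preconnected k (w i)).map e).map (liftH G H w P i)
      have hadj : W.Adj ((liftH G H w P i) (e (w i))) ⟨Sum.inl i, hiP⟩ :=
        ((glue_adj_inl_inr G H w).mpr ⟨rfl, rfl⟩).symm
      have hmk : W.connectedComponentMk ⟨Sum.inl i, hiP⟩ = c := by
        rw [← hx]
        exact ConnectedComponent.sound ((hreach.trans hadj.reachable).symm)
      exact hc ⟨⟨i, hiP⟩, hmk⟩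
  have h2 : Nat.card {c // ¬ Q c} ≤
      ∑ i : {i : V // (Tset P i).Nonempty ∨ Sum.inl i ∈ P},
        numComp (H i.1) (Tset P i.1) := by
    choose idx hBmem kk hmk using hrep
    have key : ∀ (i₁ i₂ : V), i₁ = i₂ → ∀ (k₁ : ↥((Tset P i₁)ᶜ)) (k₂ : ↥((Tset P i₂)ᶜ)),
        HEq (((H i₁).induce (Tset P i₁)ᶜ).connectedComponentMk k₁)
          (((H i₂).induce (Tset P i₂)ᶜ).connectedComponentMk k₂) →
        W.Reachable ((liftH G H w P i₁) k₁) ((liftH G H w P i₂) k₂) := by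
      rintro i _ rfl k₁ k₂ hh
      rw [heq_iff_eq] at hh
      exact ((ConnectedComponent.eq).mp hh).map (liftH G H w P i)
    let f2 : {c // ¬ Q c} →
        Σ i : {i : V // (Tset P i).Nonempty ∨ Sum.inl i ∈ P},
          ((H i.1).induce (Tset P i.1)ᶜ).ConnectedComponent :=
      fun c => ⟨⟨idx c, hBmem c⟩, ((H (idx c)).induce (Tset P (idx c))ᶜ).connectedComponentMk (kk c)⟩
    have hf2 : Function.Injective f2 := by
      intro c d h
      have hii : idx c = idx d := congrArg (fun z => z.1.1) h
      have hhh := (Sigma.mk.inj_iff.mp h).2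
      have hr := key (idx c) (idx d) hii (kk c) (kk d) hhh
      have := ConnectedComponent.sound hr
      rw [hmk c, hmk d] at this
      exact Subtype.ext this
    have := Nat.card_le_card_of_injective f2 hf2
    rwa [nat_card_sigma] at this
  omega

end Aux

theorem stmt_10 {V : Type*} [Fintype V] {K : V → Type*} [∀ i, Fintype (K i)]
    (G : SimpleGraph V) (hGconn : G.Connected)
    (H : ∀ i, SimpleGraph (K i)) (hHconn : ∀ i, (H i).Connected)
    (hHtough : ∀ i, IsTough 1 (H i)) (w : ∀ i, K i) :
    IsTough 1 G ↔ IsTough (1 / 2) (glue G H w) := by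
  classical
  constructor
  · -- G is 1-tough → G' is 1/2-tough
    intro h1 P hcut
    have hub := count_upper G H w P hHconn
    by_cases hzero : (Sset P).ncard + ∑ i, (Tset P i).ncard = 0
    · exfalso
      have hs0 : Sset (K := K) P = ∅ := by
        have h : (Sset P).ncard = 0 := by omega
        exact (Set.ncard_eq_zero (Set.toFinite _)).mp h
      have hT0 : ∀ i, Tset P i = ∅ := by
        intro i
        have hz : ∑ i, (Tset P i).ncard = 0 := by omega
        have := (Finset.sum_eq_zero_iff).mp hz i (Finset.mem_univ i)
        exact (Set.ncard_eq_zero (Set.toFinite _)).mp this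
      haveI : IsEmpty {i : V // (Tset P i).Nonempty ∨ Sum.inl i ∈ P} := by
        constructor
        rintro ⟨i, hi | hi⟩
        · rw [hT0 i] at hi
          exact Set.not_nonempty_empty hi
        · have hmem : i ∈ Sset (K := K) P := hi
          rw [hs0] at hmem
          exact hmem
      rw [Finset.univ_eq_empty, Finset.sum_empty] at hub
      have hGle : numComp G (Sset P) ≤ 1 := by
        by_cases hcG : IsCutset G (Sset P)
        · have hh := h1 _ hcG
          rw [one_mul] at hh
          have hle : numComp G (Sset P) ≤ (Sset P).ncard := by exact_mod_cast hh
          omega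
        · exact Nat.not_lt.mp hcG
      have : 1 < numComp (glue G H w) P := hcut
      omega
    · -- main case
      have hterm : ∀ i : {i : V // (Tset P i).Nonempty ∨ Sum.inl i ∈ P},
          numComp (H i.1) (Tset P i.1) ≤
            (Tset P i.1).ncard + (if Sum.inl i.1 ∈ P then 1 else 0) := by
        intro i
        by_cases hcH : IsCutset (H i.1) (Tset P i.1)
        · have hh := hHtough i.1 _ hcH
          rw [one_mul] at hh
          have hle : numComp (H i.1) (Tset P i.1) ≤ (Tset P i.1).ncard := by
            exact_mod_cast hh
          exact le_trans hle (Nat.le_add_right _ _)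
        · have hle : numComp (H i.1) (Tset P i.1) ≤ 1 := Nat.not_lt.mp hcH
          rcases i.2 with hi | hi
          · have h1t : 1 ≤ (Tset P i.1).ncard := (Set.ncard_pos (Set.toFinite _)).mpr hi
            omega
          · simp only [if_pos hi]
            omega
      have hsum2 : (∑ i : {i : V // (Tset P i).Nonempty ∨ Sum.inl i ∈ P},
            numComp (H i.1) (Tset P i.1))
          ≤ (∑ i, (Tset P i).ncard) + (Sset P).ncard := by
        have hcount : (Sset P).ncard =
            ∑ i, (if Sum.inl i ∈ P then 1 else 0) := by
          rw [← Nat.card_coe_set_eq, Nat.card_eq_fintype_card, Fintype.card_subtype,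
            Finset.card_filter]
          exact Finset.sum_congr rfl fun i _ => rfl
        calc (∑ i : {i : V // (Tset P i).Nonempty ∨ Sum.inl i ∈ P},
              numComp (H i.1) (Tset P i.1))
            ≤ ∑ i : {i : V // (Tset P i).Nonempty ∨ Sum.inl i ∈ P},
              ((Tset P i.1).ncard + (if Sum.inl i.1 ∈ P then 1 else 0)) :=
              Finset.sum_le_sum (fun i _ => hterm i)
          _ = ∑ i ∈ Finset.univ.filter
                (fun i => (Tset P i).Nonempty ∨ Sum.inl i ∈ P),
              ((Tset P i).ncard + (if Sum.inl i ∈ P then 1 else 0)) :=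
              by
              refine (Finset.sum_subtype _ (fun x => ?_)
                (fun i => (Tset P i).ncard + if Sum.inl i ∈ P then 1 else 0)).symm
              simp
          _ ≤ ∑ i : V, ((Tset P i).ncard + (if Sum.inl i ∈ P then 1 else 0)) :=
              Finset.sum_le_sum_of_subset (Finset.filter_subset _ _)
          _ = (∑ i, (Tset P i).ncard) + ∑ i, (if Sum.inl i ∈ P then 1 else 0) :=
              Finset.sum_add_distrib
          _ = (∑ i, (Tset P i).ncard) + (Sset P).ncard := by rw [← hcount]
      have hωG : numComp G (Sset P) ≤ (Sset P).ncard ∨ numComp G (Sset P) ≤ 1 := by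
        by_cases hcG : IsCutset G (Sset P)
        · left
          have hh := h1 _ hcG
          rw [one_mul] at hh
          exact_mod_cast hh
        · right
          exact Nat.not_lt.mp hcG
      have hP : P.ncard = (Sset P).ncard + ∑ i, (Tset P i).ncard := ncard_split P
      have hfin : numComp (glue G H w) P ≤ 2 * P.ncard := by
        rcases hωG with h | h <;> omega
      have hfin' : (numComp (glue G H w) P : ℝ) ≤ 2 * (P.ncard : ℝ) := by
        exact_mod_cast hfin
      linarith
  · -- G' is 1/2-tough → G is 1-tough
    intro h2 S hcut
    set P : Set (V ⊕ Σ i, K i) := Sum.inl '' S with hPdef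
    have hSset : Sset (K := K) P = S := by
      ext v
      simp only [hPdef, Sset, Set.mem_setOf_eq, Set.mem_image, Sum.inl.injEq,
        exists_eq_right]
    have hT : ∀ i, Sum.inr (⟨i, w i⟩ : Σ i, K i) ∉ P := by
      intro i hi
      rw [hPdef] at hi
      obtain ⟨v, -, hv⟩ := hi
      exact Sum.inl_ne_inr hv
    have hlow := count_lower G H w P hT
    rw [hSset] at hlow
    have hPcard : P.ncard = S.ncard := Set.ncard_image_of_injective S Sum.inl_injective
    have hcut' : IsCutset (glue G H w) P := by
      have h1 : 1 < numComp G S := hcut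
      show 1 < numComp (glue G H w) P
      omega
    have hh := h2 P hcut'
    rw [hPcard] at hh
    have h3 : (numComp G S : ℝ) + (S.ncard : ℝ) ≤ (numComp (glue G H w) P : ℝ) := by
      exact_mod_cast hlow
    rw [one_mul]
    linarith

end Toughness
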